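/- Define: a rational y is the right parent of a rational x with 0 < x < 1 if there exists a rational p with 0 ≤ p < x < y ≤ 1 such that p and y are compatible and their Farey sum equals x; a rational y is the left parent of x if there exists a rational r with 0 ≤ y < x < r ≤ 1 such that y and r are compatible and their Farey sum equals x. Let q be a rational with 0 < q < 1 and let (q^L, q^R) be its pair of parents (the unique compatible pair with Farey sum q). Then: for every rational s with q^L < s < q, there exist an integer k ≥ 0 and a finite sequence of rationals s = s_0, s_1, …, s_k = q such that s_{i+1} is the right parent of s_i for every 0 ≤ i < k; dually, for every rational s with q < s < q^R, there is a finite sequence s = s_0, …, s_k = q in which each s_{i+1} is the left parent of s_i. -/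

import Mathlib

/-- Rationals `p, q` (in reduced form) are compatible if `|p.num * q.den - q.num * p.den| = 1`. -/
def FareyCompatible (p q : ℚ) : Prop :=
  |p.num * (q.den : ℤ) - q.num * (p.den : ℤ)| = 1

/-- The Farey sum (mediant) of two rationals, as a rational number. -/
def fareySum (p q : ℚ) : ℚ :=
  ((p.num : ℚ) + (q.num : ℚ)) / ((p.den : ℚ) + (q.den : ℚ))

/-- `y` is the right parent of `x` (for `0 < x < 1`): there is a rational `p` with
`0 ≤ p < x < y ≤ 1` such that `p` and `y` are compatible with Farey sum `x`. -/
def IsRightParent (y x : ℚ) : Prop :=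
  ∃ p : ℚ, 0 ≤ p ∧ p < x ∧ x < y ∧ y ≤ 1 ∧ FareyCompatible p y ∧ fareySum p y = x

/-- `y` is the left parent of `x` (for `0 < x < 1`): there is a rational `r` with
`0 ≤ y < x < r ≤ 1` such that `y` and `r` are compatible with Farey sum `x`. -/
def IsLeftParent (y x : ℚ) : Prop :=
  ∃ r : ℚ, 0 ≤ y ∧ y < x ∧ x < r ∧ r ≤ 1 ∧ FareyCompatible y r ∧ fareySum y r = x

lemma ratRep (N D : ℤ) (hD : 0 < D) (hco : N.natAbs.Coprime D.natAbs) :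
    ∃ r : ℚ, r = (N : ℚ) / (D : ℚ) ∧ r.num = N ∧ (r.den : ℤ) = D := by
  have hDnat : (D.toNat : ℤ) = D := Int.toNat_of_nonneg hD.le
  refine ⟨Rat.mk' N D.toNat (by omega) (by rwa [show D.toNat = D.natAbs by omega]), ?_, rfl, by simpa using hDnat⟩
  rw [Rat.mk_eq_divInt, Rat.divInt_eq_div, hDnat]

lemma ratLt (r r' : ℚ) (h : r.num * (r'.den : ℤ) < r'.num * (r.den : ℤ)) : r < r' := by
  rw [← Rat.num_div_den r, ← Rat.num_div_den r']
  rw [div_lt_div_iff₀ (by exact_mod_cast r.den_pos) (by exact_mod_cast r'.den_pos)]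
  exact_mod_cast h

lemma ratLe (r r' : ℚ) (h : r.num * (r'.den : ℤ) ≤ r'.num * (r.den : ℤ)) : r ≤ r' := by
  rw [← Rat.num_div_den r, ← Rat.num_div_den r']
  rw [div_le_div_iff₀ (by exact_mod_cast r.den_pos) (by exact_mod_cast r'.den_pos)]
  exact_mod_cast h

lemma ratLt' (r r' : ℚ) (h : r < r') : r.num * (r'.den : ℤ) < r'.num * (r.den : ℤ) := by
  rw [← Rat.num_div_den r, ← Rat.num_div_den r'] at h
  rw [div_lt_div_iff₀ (by exact_mod_cast r.den_pos) (by exact_mod_cast r'.den_pos)] at h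
  exact_mod_cast h

lemma intKey (p1 q1 p2 q2 a b : ℤ) (hq1 : 0 < q1) (hq2 : 0 < q2)
    (hD : p2 * q1 - p1 * q2 = 1) (h1 : p1 * b < a * q1) (h2 : a * q2 < p2 * b)
    (hab : IsCoprime a b) :
    ∃ NL DL NR DR : ℤ, 0 < DL ∧ 0 < DR ∧ DL < b ∧ DR < b ∧
      NR * DL - NL * DR = 1 ∧ NL + NR = a ∧ DL + DR = b ∧
      NR * b - a * DR = 1 ∧ a * DL - NL * b = 1 ∧
      0 ≤ p2 * DR - NR * q2 ∧ 0 ≤ NL * q1 - p1 * DL := by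
  set x : ℤ := a * q1 - p1 * b with hxdef
  set y : ℤ := p2 * b - a * q2 with hydef
  have hx : 0 < x := by omega
  have hy : 0 < y := by omega
  have hax : x * p2 + y * p1 = a := by linear_combination a * hD
  have hbx : x * q2 + y * q1 = b := by linear_combination b * hD
  obtain ⟨m, n, hmn⟩ := hab
  have hco_xy : IsCoprime x y :=
    ⟨m * p2 + n * q2, m * p1 + n * q1, by linear_combination m * hax + n * hbx + hmn⟩
  obtain ⟨c, d, hcd⟩ := hco_xy
  set t : ℤ := (d - 1) / x with htdef
  set x1 : ℤ := d - t * x with hx1def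
  set y1 : ℤ := -c - t * y with hy1def
  have hdet : x1 * y - x * y1 = 1 := by linear_combination hcd
  have hx1eq : x1 = (d - 1) % x + 1 := by
    have h := Int.mul_ediv_add_emod (d - 1) x
    linear_combination -h
  have hmod1 : 0 ≤ (d - 1) % x := Int.emod_nonneg _ hx.ne'
  have hmod2 : (d - 1) % x < x := Int.emod_lt_of_pos _ hx
  have hx1a : 1 ≤ x1 := by omega
  have hx1b : x1 ≤ x := by omega
  have hy1a : 0 ≤ y1 := by nlinarith
  have hy1b : y1 ≤ y - 1 := by nlinarith
  refine ⟨(x - x1) * p2 + (y - y1) * p1, (x - x1) * q2 + (y - y1) * q1,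
      x1 * p2 + y1 * p1, x1 * q2 + y1 * q1, ?_, ?_, ?_, ?_, ?_, ?_, ?_, ?_, ?_, ?_, ?_⟩
  · nlinarith [mul_nonneg (by omega : (0:ℤ) ≤ x - x1) hq2.le,
      le_mul_of_one_le_left hq1.le (by omega : (1:ℤ) ≤ y - y1)]
  · nlinarith [mul_nonneg hy1a hq1.le, le_mul_of_one_le_left hq2.le hx1a]
  · nlinarith [le_mul_of_one_le_left hq2.le hx1a,
      mul_le_mul_of_nonneg_left hq1.le (by omega : (0:ℤ) ≤ y - y1), hbx]
  · nlinarith [mul_nonneg (by omega : (0:ℤ) ≤ x - x1) hq2.le,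
      le_mul_of_one_le_left hq1.le (by omega : (1:ℤ) ≤ y - y1), hbx]
  · linear_combination (x1 * y - x * y1) * hD + hdet
  · linear_combination hax
  · linear_combination hbx
  · linear_combination (x1 * q2 + y1 * q1) * hax - (x1 * p2 + y1 * p1) * hbx
      + (x1 * y - x * y1) * hD + hdet
  · linear_combination ((x - x1) * p2 + (y - y1) * p1) * hbx
      - ((x - x1) * q2 + (y - y1) * q1) * hax + (x1 * y - x * y1) * hD + hdet
  · have h : p2 * (x1 * q2 + y1 * q1) - (x1 * p2 + y1 * p1) * q2 = y1 := by
      linear_combination y1 * hD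
    linarith
  · have h : ((x - x1) * p2 + (y - y1) * p1) * q1 - p1 * ((x - x1) * q2 + (y - y1) * q1)
        = x - x1 := by linear_combination (x - x1) * hD
    linarith

lemma fareyKey (u v s : ℚ) (hD : v.num * (u.den : ℤ) - u.num * (v.den : ℤ) = 1)
    (hus : u < s) (hsv : s < v) :
    ∃ sL sR : ℚ, u ≤ sL ∧ sL < s ∧ s < sR ∧ sR ≤ v ∧
      FareyCompatible sL sR ∧ fareySum sL sR = s ∧ sL.den < s.den ∧ sR.den < s.den := by
  have hab : IsCoprime s.num ((s.den : ℤ)) := by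
    rw [Int.isCoprime_iff_gcd_eq_one]
    simpa [Int.gcd] using s.reduced
  obtain ⟨NL, DL, NR, DR, hDL, hDR, hDLb, hDRb, hdet2, hNsum, hDsum, hNRb, hNLb, hRv, hLu⟩ :=
    intKey u.num (u.den : ℤ) v.num (v.den : ℤ) s.num (s.den : ℤ)
      (by exact_mod_cast u.den_pos) (by exact_mod_cast v.den_pos)
      hD (ratLt' u s hus) (ratLt' s v hsv) hab
  have hcoR : NR.natAbs.Coprime DR.natAbs :=
    Int.isCoprime_iff_gcd_eq_one.mp ⟨DL, -NL, by linear_combination hdet2⟩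
  have hcoL : NL.natAbs.Coprime DL.natAbs :=
    Int.isCoprime_iff_gcd_eq_one.mp ⟨-DR, NR, by linear_combination hdet2⟩
  obtain ⟨sR, hsReq, hsRnum, hsRden⟩ := ratRep NR DR hDR hcoR
  obtain ⟨sL, hsLeq, hsLnum, hsLden⟩ := ratRep NL DL hDL hcoL
  refine ⟨sL, sR, ?_, ?_, ?_, ?_, ?_, ?_, ?_, ?_⟩
  · exact ratLe u sL (by rw [hsLnum, hsLden]; linarith)
  · exact ratLt sL s (by rw [hsLnum, hsLden]; linarith)
  · exact ratLt s sR (by rw [hsRnum, hsRden]; linarith)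
  · exact ratLe sR v (by rw [hsRnum, hsRden]; linarith)
  · show |sL.num * (sR.den : ℤ) - sR.num * (sL.den : ℤ)| = 1
    rw [hsLnum, hsLden, hsRnum, hsRden]
    rw [abs_eq (by norm_num)]
    right; linarith
  · show ((sL.num : ℚ) + (sR.num : ℚ)) / ((sL.den : ℚ) + (sR.den : ℚ)) = s
    have h1 : (sL.num : ℚ) + (sR.num : ℚ) = (s.num : ℚ) := by
      rw [hsLnum, hsRnum]; exact_mod_cast congrArg (Int.cast : ℤ → ℚ) hNsum
    have h2 : ((sL.den : ℚ)) + (sR.den : ℚ) = (s.den : ℚ) := by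
      have : ((sL.den : ℤ) : ℚ) + ((sR.den : ℤ) : ℚ) = (((s.den : ℤ)) : ℚ) := by
        rw [hsLden, hsRden]; exact_mod_cast congrArg (Int.cast : ℤ → ℚ) hDsum
      exact_mod_cast this
    rw [h1, h2]
    exact Rat.num_div_den s
  · have h : (sL.den : ℤ) < ((s.den : ℕ) : ℤ) := by rw [hsLden]; exact hDLb
    exact_mod_cast h
  · have h : (sR.den : ℤ) < ((s.den : ℕ) : ℤ) := by rw [hsRden]; exact hDRb
    exact_mod_cast h

lemma rightChain : ∀ n : ℕ, ∀ s u v : ℚ, s.den ≤ n → 0 ≤ u → v ≤ 1 →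
    (v.num * (u.den : ℤ) - u.num * (v.den : ℤ) = 1) → u < s → s < v →
    ∃ (k : ℕ) (seq : ℕ → ℚ), seq 0 = s ∧ seq k = v ∧
      ∀ i < k, IsRightParent (seq (i + 1)) (seq i) := by
  intro n
  induction n using Nat.strong_induction_on with
  | _ n IH =>
    intro s u v hsn hu0 hv1 hD hus hsv
    obtain ⟨sL, sR, huL, hLs, hsR, hRv, hcomp, hmed, hdL, hdR⟩ := fareyKey u v s hD hus hsv
    have hRP : IsRightParent sR s :=
      ⟨sL, le_trans hu0 huL, hLs, hsR, le_trans hRv hv1, hcomp, hmed⟩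
    by_cases hRv' : sR = v
    · exact ⟨1, fun i => if i = 0 then s else v, by simp, by simp, by
        intro i hi
        interval_cases i
        simpa [hRv'] using hRP⟩
    · have hRltv : sR < v := lt_of_le_of_ne hRv hRv'
      obtain ⟨k, seq, hseq0, hseqk, hchain⟩ :=
        IH sR.den (by omega) sR u v le_rfl hu0 hv1 hD (lt_trans hus hsR) hRltv
      refine ⟨k + 1, fun i => if i = 0 then s else seq (i - 1), by simp, by simp [hseqk], ?_⟩
      intro i hi
      match i with
      | 0 => simpa [hseq0] using hRP
      | j + 1 =>
        have := hchain j (by omega)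
        simpa using this

lemma leftChain : ∀ n : ℕ, ∀ s u v : ℚ, s.den ≤ n → 0 ≤ u → v ≤ 1 →
    (v.num * (u.den : ℤ) - u.num * (v.den : ℤ) = 1) → u < s → s < v →
    ∃ (k : ℕ) (seq : ℕ → ℚ), seq 0 = s ∧ seq k = u ∧
      ∀ i < k, IsLeftParent (seq (i + 1)) (seq i) := by
  intro n
  induction n using Nat.strong_induction_on with
  | _ n IH =>
    intro s u v hsn hu0 hv1 hD hus hsv
    obtain ⟨sL, sR, huL, hLs, hsR, hRv, hcomp, hmed, hdL, hdR⟩ := fareyKey u v s hD hus hsv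
    have hLP : IsLeftParent sL s :=
      ⟨sR, le_trans hu0 huL, hLs, hsR, le_trans hRv hv1, hcomp, hmed⟩
    by_cases huL' : sL = u
    · exact ⟨1, fun i => if i = 0 then s else u, by simp, by simp, by
        intro i hi
        interval_cases i
        simpa [huL'] using hLP⟩
    · have hultL : u < sL := lt_of_le_of_ne huL (Ne.symm huL')
      obtain ⟨k, seq, hseq0, hseqk, hchain⟩ :=
        IH sL.den (by omega) sL u v le_rfl hu0 hv1 hD hultL (lt_trans hLs hsv)
      refine ⟨k + 1, fun i => if i = 0 then s else seq (i - 1), by simp, by simp [hseqk], ?_⟩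
      intro i hi
      match i with
      | 0 => simpa [hseq0] using hLP
      | j + 1 =>
        have := hchain j (by omega)
        simpa using this

/-- Every rational strictly between `q^L` and `q` is connected to `q` by a finite
chain of right parents, and every rational strictly between `q` and `q^R` is
connected to `q` by a finite chain of left parents. -/
theorem parent_chain (q qL qR : ℚ) (h0 : 0 < q) (h1 : q < 1)
    (hL0 : 0 ≤ qL) (hLq : qL < q) (hqR : q < qR) (hR1 : qR ≤ 1)
    (hcompat : FareyCompatible qL qR) (hsum : fareySum qL qR = q) :
    (∀ s : ℚ, qL < s → s < q →
      ∃ (k : ℕ) (seq : ℕ → ℚ), seq 0 = s ∧ seq k = q ∧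
        ∀ i < k, IsRightParent (seq (i + 1)) (seq i)) ∧
    (∀ s : ℚ, q < s → s < qR →
      ∃ (k : ℕ) (seq : ℕ → ℚ), seq 0 = s ∧ seq k = q ∧
        ∀ i < k, IsLeftParent (seq (i + 1)) (seq i)) := by
  have hLR : qL < qR := lt_trans hLq hqR
  have hD : qR.num * (qL.den : ℤ) - qL.num * (qR.den : ℤ) = 1 := by
    have h := ratLt' qL qR hLR
    rcases abs_eq (by norm_num : (0:ℤ) ≤ 1) |>.mp hcompat with h' | h'
    · linarith
    · linarith
  -- identify q's num and den
  have hqden : 0 < (qL.den : ℤ) + (qR.den : ℤ) := by positivity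
  have hco : (qL.num + qR.num).natAbs.Coprime ((qL.den : ℤ) + (qR.den : ℤ)).natAbs :=
    Int.isCoprime_iff_gcd_eq_one.mp
      ⟨(qL.den : ℤ), -qL.num, by linear_combination hD⟩
  obtain ⟨r, hreq, hrnum, hrden⟩ := ratRep (qL.num + qR.num) ((qL.den : ℤ) + (qR.den : ℤ)) hqden hco
  have hrq : r = q := by
    rw [← hsum]
    show r = ((qL.num : ℚ) + (qR.num : ℚ)) / ((qL.den : ℚ) + (qR.den : ℚ))
    rw [hreq]; push_cast; ring_nf
  have hqnum : q.num = qL.num + qR.num := by rw [← hrq]; exact hrnum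
  have hqden' : (q.den : ℤ) = (qL.den : ℤ) + (qR.den : ℤ) := by rw [← hrq]; exact hrden
  constructor
  · intro s hs1 hs2
    have hDq : q.num * (qL.den : ℤ) - qL.num * (q.den : ℤ) = 1 := by
      rw [hqnum, hqden']; linarith
    exact rightChain s.den s qL q le_rfl hL0 h1.le hDq hs1 hs2
  · intro s hs1 hs2
    have hDq : qR.num * (q.den : ℤ) - q.num * (qR.den : ℤ) = 1 := by
      rw [hqnum, hqden']; linarith
    exact leftChain s.den s q qR le_rfl h0.le hR1 hDq hs1 hs2
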